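/- Suppose a multiplicative function f: ℕ → {−1, 0, 1} satisfies: for every Dirichlet character ε mod q, the Dirichlet series G_ε(z) = ∑_{n≥1} f(n)ε(n)/n^z satisfies log G_ε(z) = ∑_{p prime} f(p)ε(p)/p^z + g(z) with g holomorphic on Re(z) > 1/2, and for each root of unity ξ ∈ Im ε the sets {p : ε(p) = ξ, f(p) = 1} and {p : ε(p) = ξ, f(p) = −1} are regular sets of primes of equal density 1/(2#Im ε). Then for every d coprime to q, the Dirichlet series F(z) = ∑_{n ≡ d mod q} f(n)/n^z extends holomorphically to Re(z) ≥ 1. -/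

import Mathlib

open Filter Topology Set Complex


lemma aux_summable {z : ℂ} (hz : 1 < z.re) (c : ℕ → ℂ) (hc : ∀ n, ‖c n‖ ≤ 1) :
    Summable (fun n : ℕ => c n / (n : ℂ) ^ z) := by
  have hs : Summable (fun n : ℕ => (n : ℝ) ^ (-z.re)) := by
    rw [Real.summable_nat_rpow]; linarith
  refine Summable.of_norm (hs.of_nonneg_of_le (fun n => norm_nonneg _) (fun n => ?_))
  rcases Nat.eq_zero_or_pos n with h | h
  · subst h
    rw [Nat.cast_zero, Complex.zero_cpow (by intro h; rw [h] at hz; simp at hz; linarith)]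
    simp [Real.zero_rpow (by linarith : -z.re ≠ 0)]
  · rw [norm_div, Complex.norm_natCast_cpow_of_pos h, Real.rpow_neg (Nat.cast_nonneg n),
      div_eq_mul_inv]
    have : (0:ℝ) < (n:ℝ) ^ z.re := Real.rpow_pos_of_pos (by exact_mod_cast h) _
    calc ‖c n‖ * ((n:ℝ) ^ z.re)⁻¹ ≤ 1 * ((n:ℝ) ^ z.re)⁻¹ := by
          gcongr; exact hc n
      _ = ((n:ℝ) ^ z.re)⁻¹ := one_mul _

lemma aux_summable_pow {z : ℂ} (hz : 1 < z.re) :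
    Summable (fun n : ℕ => (n : ℂ) ^ (-z)) := by
  have := aux_summable hz (fun _ => 1) (fun _ => by simp)
  simpa [Complex.cpow_neg, one_div, div_eq_mul_inv] using this

lemma aux_summable_ind {z : ℂ} (hz : 1 < z.re) (S : Set ℕ) :
    Summable (S.indicator (fun n : ℕ => (n : ℂ) ^ (-z))) :=
  (aux_summable_pow hz).indicator S

lemma hval_norm {f : ℕ → ℝ} (hval : ∀ n : ℕ, f n ∈ ({-1, 0, 1} : Set ℝ)) (n : ℕ) :
    ‖(f n : ℂ)‖ ≤ 1 := by
  have h := hval n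
  simp only [Set.mem_insert_iff, Set.mem_singleton_iff] at h
  rcases h with h | h | h <;> simp [h]

lemma prime_decomp (q : ℕ) [NeZero q] (f : ℕ → ℝ)
    (hval : ∀ n : ℕ, f n ∈ ({-1, 0, 1} : Set ℝ)) (ε : DirichletCharacter ℂ q)
    (hT : ({ξ : ℂ | ∃ u : (ZMod q)ˣ, ε (u : ZMod q) = ξ}).Finite)
    {z : ℂ} (hz : 1 < z.re) :
    (∑' p : {p : ℕ // p.Prime}, (f p : ℂ) * ε ((p : ℕ) : ZMod q) / ((p : ℕ) : ℂ) ^ z) =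
      ∑ ξ ∈ hT.toFinset, ξ *
        ((∑' p : {p : ℕ | p.Prime ∧ ε (p : ZMod q) = ξ ∧ f p = 1}, ((p : ℕ) : ℂ) ^ (-z)) -
         (∑' p : {p : ℕ | p.Prime ∧ ε (p : ZMod q) = ξ ∧ f p = -1}, ((p : ℕ) : ℂ) ^ (-z))) := by
  classical
  set pw : ℕ → ℂ := fun n => (n : ℂ) ^ (-z) with hpw
  have key : ∀ n : ℕ,
      ({p : ℕ | p.Prime}).indicator (fun n => (f n : ℂ) * ε (n : ZMod q) / (n : ℂ) ^ z) n =
      ∑ ξ ∈ hT.toFinset, ξ *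
        (({p : ℕ | p.Prime ∧ ε (p : ZMod q) = ξ ∧ f p = 1}).indicator pw n -
         ({p : ℕ | p.Prime ∧ ε (p : ZMod q) = ξ ∧ f p = -1}).indicator pw n) := by
    intro n
    by_cases hn : n.Prime
    · rw [Set.indicator_of_mem (show n ∈ {p : ℕ | Nat.Prime p} from hn)]
      by_cases hu : IsUnit ((n : ZMod q))
      · set ξ0 : ℂ := ε (n : ZMod q) with hξ0
        have hmem : ξ0 ∈ hT.toFinset := hT.mem_toFinset.mpr ⟨hu.unit, by rw [hu.unit_spec]⟩
        rw [Finset.sum_eq_single_of_mem ξ0 hmem ?_]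
        · have h := hval n
          simp only [Set.mem_insert_iff, Set.mem_singleton_iff] at h
          rcases h with h | h | h
          · rw [Set.indicator_of_notMem (fun hc => by
                have h2 := hc.2.2; rw [h] at h2; norm_num at h2),
              Set.indicator_of_mem (show n ∈ {p : ℕ | Nat.Prime p ∧ ε (p : ZMod q) = ξ0 ∧ f p = -1} from ⟨hn, rfl, h⟩)]
            simp only [h, hpw, Complex.cpow_neg, div_eq_mul_inv, Complex.ofReal_neg,
              Complex.ofReal_one]
            ring
          · rw [Set.indicator_of_notMem (fun hc => by
                have h2 := hc.2.2; rw [h] at h2; norm_num at h2),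
              Set.indicator_of_notMem (fun hc => by
                have h2 := hc.2.2; rw [h] at h2; norm_num at h2)]
            simp [h]
          · rw [Set.indicator_of_mem (show n ∈ {p : ℕ | Nat.Prime p ∧ ε (p : ZMod q) = ξ0 ∧ f p = 1} from ⟨hn, rfl, h⟩),
              Set.indicator_of_notMem (fun hc => by
                have h2 := hc.2.2; rw [h] at h2; norm_num at h2)]
            simp only [h, hpw, Complex.cpow_neg, div_eq_mul_inv, Complex.ofReal_one]
            ring
        · intro ξ _ hne
          rw [Set.indicator_of_notMem (fun hc => hne (by rw [hξ0, hc.2.1])),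
            Set.indicator_of_notMem (fun hc => hne (by rw [hξ0, hc.2.1]))]
          ring
      · rw [ε.map_nonunit hu]
        rw [Finset.sum_eq_zero ?_]
        · ring
        · intro ξ hξ
          obtain ⟨u, huξ⟩ := hT.mem_toFinset.mp hξ
          have hξne : ξ ≠ 0 := by
            rw [← huξ, ← ε.coe_toUnitHom]
            exact Units.ne_zero _
          rw [Set.indicator_of_notMem (fun hc => hξne (by rw [← hc.2.1, ε.map_nonunit hu])),
            Set.indicator_of_notMem (fun hc => hξne (by rw [← hc.2.1, ε.map_nonunit hu]))]
          ring
    · rw [Set.indicator_of_notMem (show n ∉ {p : ℕ | Nat.Prime p} from hn), Finset.sum_eq_zero ?_]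
      intro ξ _
      rw [Set.indicator_of_notMem (fun hc => hn hc.1),
        Set.indicator_of_notMem (fun hc => hn hc.1)]
      ring
  have hsum : ∀ S : Set ℕ, Summable (S.indicator pw) := fun S => aux_summable_ind hz S
  calc (∑' p : {p : ℕ // p.Prime}, (f p : ℂ) * ε ((p : ℕ) : ZMod q) / ((p : ℕ) : ℂ) ^ z)
      = ∑' n : ℕ, ({p : ℕ | p.Prime}).indicator
          (fun n => (f n : ℂ) * ε (n : ZMod q) / (n : ℂ) ^ z) n :=
        by exact tsum_subtype {p : ℕ | Nat.Prime p} fun n => (f n : ℂ) * ε (n : ZMod q) / (n : ℂ) ^ z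
    _ = ∑' n : ℕ, ∑ ξ ∈ hT.toFinset, ξ *
          (({p : ℕ | p.Prime ∧ ε (p : ZMod q) = ξ ∧ f p = 1}).indicator pw n -
           ({p : ℕ | p.Prime ∧ ε (p : ZMod q) = ξ ∧ f p = -1}).indicator pw n) :=
        tsum_congr key
    _ = ∑ ξ ∈ hT.toFinset, ∑' n : ℕ, ξ *
          (({p : ℕ | p.Prime ∧ ε (p : ZMod q) = ξ ∧ f p = 1}).indicator pw n -
           ({p : ℕ | p.Prime ∧ ε (p : ZMod q) = ξ ∧ f p = -1}).indicator pw n) :=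
        Summable.tsum_finsetSum (fun ξ _ => (((hsum _).sub (hsum _)).mul_left ξ))
    _ = ∑ ξ ∈ hT.toFinset, ξ *
        ((∑' p : {p : ℕ | p.Prime ∧ ε (p : ZMod q) = ξ ∧ f p = 1}, ((p : ℕ) : ℂ) ^ (-z)) -
         (∑' p : {p : ℕ | p.Prime ∧ ε (p : ZMod q) = ξ ∧ f p = -1}, ((p : ℕ) : ℂ) ^ (-z))) := by
        refine Finset.sum_congr rfl (fun ξ _ => ?_)
        rw [tsum_mul_left, Summable.tsum_sub (hsum _) (hsum _),
          ← tsum_subtype, ← tsum_subtype]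

lemma char_ext (q : ℕ) [NeZero q] (f : ℕ → ℝ)
    (hval : ∀ n : ℕ, f n ∈ ({-1, 0, 1} : Set ℝ)) (ε : DirichletCharacter ℂ q)
    (hlogε : ∃ g : ℂ → ℂ,
      AnalyticOnNhd ℂ g {z : ℂ | 1 / 2 < z.re} ∧
      ∀ z : ℂ, 1 < z.re →
        (∑' n : ℕ, (f n : ℂ) * ε (n : ZMod q) / (n : ℂ) ^ z) =
          Complex.exp
            ((∑' p : {p : ℕ // p.Prime}, (f p : ℂ) * ε ((p : ℕ) : ZMod q) /
                ((p : ℕ) : ℂ) ^ z) + g z))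
    (hregε : ∀ ξ ∈ {ξ : ℂ | ∃ u : (ZMod q)ˣ, ε (u : ZMod q) = ξ},
      (∃ h : ℂ → ℂ, AnalyticOnNhd ℂ h {z : ℂ | 1 ≤ z.re} ∧
        ∀ z : ℂ, 1 < z.re →
          ∑' p : {p : ℕ | p.Prime ∧ ε (p : ZMod q) = ξ ∧ f p = 1}, ((p : ℕ) : ℂ) ^ (-z) =
            (1 / (2 * ({ξ : ℂ | ∃ u : (ZMod q)ˣ, ε (u : ZMod q) = ξ}.ncard : ℝ)) : ℝ) *
              Complex.log (1 / (z - 1)) + h z) ∧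
      (∃ h : ℂ → ℂ, AnalyticOnNhd ℂ h {z : ℂ | 1 ≤ z.re} ∧
        ∀ z : ℂ, 1 < z.re →
          ∑' p : {p : ℕ | p.Prime ∧ ε (p : ZMod q) = ξ ∧ f p = -1}, ((p : ℕ) : ℂ) ^ (-z) =
            (1 / (2 * ({ξ : ℂ | ∃ u : (ZMod q)ˣ, ε (u : ZMod q) = ξ}.ncard : ℝ)) : ℝ) *
              Complex.log (1 / (z - 1)) + h z)) :
    ∃ E : ℂ → ℂ, AnalyticOnNhd ℂ E {z : ℂ | 1 ≤ z.re} ∧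
      ∀ z : ℂ, 1 < z.re →
        (∑' n : ℕ, (f n : ℂ) * ε (n : ZMod q) / (n : ℂ) ^ z) = E z := by
  classical
  obtain ⟨g, hg, hgeq⟩ := hlogε
  have hT : ({ξ : ℂ | ∃ u : (ZMod q)ˣ, ε (u : ZMod q) = ξ}).Finite := by
    apply Set.Finite.subset (Set.finite_range (fun u : (ZMod q)ˣ => ε (u : ZMod q)))
    rintro ξ ⟨u, hu⟩; exact ⟨u, hu⟩
  choose hp hpA hpE using fun ξ hξ => (hregε ξ hξ).1
  choose hm hmA hmE using fun ξ hξ => (hregε ξ hξ).2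
  refine ⟨fun z => Complex.exp
    ((∑ x ∈ hT.toFinset.attach,
        x.1 * (hp x.1 (hT.mem_toFinset.mp x.2) z - hm x.1 (hT.mem_toFinset.mp x.2) z)) + g z),
    ?_, ?_⟩
  · apply AnalyticOnNhd.cexp
    apply AnalyticOnNhd.add
    · apply Finset.analyticOnNhd_fun_sum
      intro x _
      exact analyticOnNhd_const.mul ((hpA x.1 (hT.mem_toFinset.mp x.2)).sub
        (hmA x.1 (hT.mem_toFinset.mp x.2)))
    · exact hg.mono (fun z hz => by simp only [Set.mem_setOf_eq] at *; linarith)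
  · intro z hz
    rw [hgeq z hz]
    congr 2
    rw [prime_decomp q f hval ε hT hz]
    refine Eq.trans (Finset.sum_attach hT.toFinset (fun ξ => ξ *
      ((∑' p : {p : ℕ | p.Prime ∧ ε (p : ZMod q) = ξ ∧ f p = 1}, ((p : ℕ) : ℂ) ^ (-z)) -
       (∑' p : {p : ℕ | p.Prime ∧ ε (p : ZMod q) = ξ ∧ f p = -1}, ((p : ℕ) : ℂ) ^ (-z))))).symm ?_
    refine Finset.sum_congr rfl (fun x _ => ?_)
    rw [hpE x.1 (hT.mem_toFinset.mp x.2) z hz, hmE x.1 (hT.mem_toFinset.mp x.2) z hz]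
    ring

/-- If each twisted Dirichlet series `G_ε(z) = ∑ f(n)ε(n)/n^z` has a logarithm of the form
`∑_p f(p)ε(p)/p^z + g(z)` with `g` holomorphic on `Re z > 1/2`, and for each `ξ ∈ Im ε` the
sets of primes with `ε(p) = ξ` and `f(p) = ±1` are regular of equal density `1/(2 #Im ε)`,
then for every `d` coprime to `q` the series `∑_{n ≡ d mod q} f(n)/n^z` extends
holomorphically to `Re z ≥ 1`. -/
theorem progression_series_analytic
    (q : ℕ) [NeZero q] (f : ℕ → ℝ)
    (hval : ∀ n : ℕ, f n ∈ ({-1, 0, 1} : Set ℝ))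
    (hf1 : f 1 = 1)
    (hmul : ∀ m n : ℕ, Nat.Coprime m n → f (m * n) = f m * f n)
    (hlog : ∀ ε : DirichletCharacter ℂ q, ∃ g : ℂ → ℂ,
      AnalyticOnNhd ℂ g {z : ℂ | 1 / 2 < z.re} ∧
      ∀ z : ℂ, 1 < z.re →
        (∑' n : ℕ, (f n : ℂ) * ε (n : ZMod q) / (n : ℂ) ^ z) =
          Complex.exp
            ((∑' p : {p : ℕ // p.Prime}, (f p : ℂ) * ε ((p : ℕ) : ZMod q) /
                ((p : ℕ) : ℂ) ^ z) + g z))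
    (hreg : ∀ ε : DirichletCharacter ℂ q,
      ∀ ξ ∈ {ξ : ℂ | ∃ u : (ZMod q)ˣ, ε (u : ZMod q) = ξ},
      (∃ h : ℂ → ℂ, AnalyticOnNhd ℂ h {z : ℂ | 1 ≤ z.re} ∧
        ∀ z : ℂ, 1 < z.re →
          ∑' p : {p : ℕ | p.Prime ∧ ε (p : ZMod q) = ξ ∧ f p = 1}, ((p : ℕ) : ℂ) ^ (-z) =
            (1 / (2 * ({ξ : ℂ | ∃ u : (ZMod q)ˣ, ε (u : ZMod q) = ξ}.ncard : ℝ)) : ℝ) *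
              Complex.log (1 / (z - 1)) + h z) ∧
      (∃ h : ℂ → ℂ, AnalyticOnNhd ℂ h {z : ℂ | 1 ≤ z.re} ∧
        ∀ z : ℂ, 1 < z.re →
          ∑' p : {p : ℕ | p.Prime ∧ ε (p : ZMod q) = ξ ∧ f p = -1}, ((p : ℕ) : ℂ) ^ (-z) =
            (1 / (2 * ({ξ : ℂ | ∃ u : (ZMod q)ˣ, ε (u : ZMod q) = ξ}.ncard : ℝ)) : ℝ) *
              Complex.log (1 / (z - 1)) + h z)) :
    ∀ d : ℕ, Nat.Coprime d q →
      ∃ F : ℂ → ℂ, AnalyticOnNhd ℂ F {z : ℂ | 1 ≤ z.re} ∧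
        ∀ z : ℂ, 1 < z.re →
          F z = ∑' n : {n : ℕ // n ≡ d [MOD q]}, ((f n : ℂ)) / ((n : ℕ) : ℂ) ^ z := by
  intro d hd
  classical
  choose E hEA hEeq using fun ε : DirichletCharacter ℂ q => char_ext q f hval ε (hlog ε) (hreg ε)
  have htot : (q.totient : ℂ) ≠ 0 := by
    exact_mod_cast (Nat.totient_pos.mpr (Nat.pos_of_ne_zero (NeZero.ne q))).ne'
  have hdu : IsUnit ((d : ZMod q)) := (ZMod.isUnit_iff_coprime d q).mpr hd
  refine ⟨fun z => (q.totient : ℂ)⁻¹ *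
      ∑ ε : DirichletCharacter ℂ q, ε ((d : ZMod q))⁻¹ * E ε z, ?_, ?_⟩
  · exact analyticOnNhd_const.mul
      (Finset.analyticOnNhd_fun_sum _ (fun ε _ => analyticOnNhd_const.mul (hEA ε)))
  · intro z hz
    have hsm : ∀ ε : DirichletCharacter ℂ q,
        Summable (fun n : ℕ => (f n : ℂ) * ε (n : ZMod q) / (n : ℂ) ^ z) := by
      intro ε
      apply aux_summable hz
      intro n
      calc ‖(f n : ℂ) * ε (n : ZMod q)‖ = ‖(f n : ℂ)‖ * ‖ε (n : ZMod q)‖ := norm_mul _ _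
        _ ≤ 1 :=
            mul_le_one₀ (hval_norm hval n) (norm_nonneg _) (ε.norm_le_one _)
    calc (q.totient : ℂ)⁻¹ * ∑ ε : DirichletCharacter ℂ q, ε ((d : ZMod q))⁻¹ * E ε z
        = (q.totient : ℂ)⁻¹ * ∑ ε : DirichletCharacter ℂ q,
            ∑' n : ℕ, ε ((d : ZMod q))⁻¹ * ((f n : ℂ) * ε (n : ZMod q) / (n : ℂ) ^ z) := by
          congr 1
          refine Finset.sum_congr rfl (fun ε _ => ?_)
          rw [tsum_mul_left, hEeq ε z hz]
      _ = (q.totient : ℂ)⁻¹ * ∑' n : ℕ, ∑ ε : DirichletCharacter ℂ q,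
            ε ((d : ZMod q))⁻¹ * ((f n : ℂ) * ε (n : ZMod q) / (n : ℂ) ^ z) := by
          rw [Summable.tsum_finsetSum (fun ε _ => (hsm ε).mul_left _)]
      _ = ∑' n : ℕ, ({n : ℕ | n ≡ d [MOD q]}).indicator
            (fun n => (f n : ℂ) / (n : ℂ) ^ z) n := by
          rw [← tsum_mul_left]
          refine tsum_congr (fun n => ?_)
          have : ∑ ε : DirichletCharacter ℂ q,
              ε ((d : ZMod q))⁻¹ * ((f n : ℂ) * ε (n : ZMod q) / (n : ℂ) ^ z) =
              ((f n : ℂ) / (n : ℂ) ^ z) *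
                ∑ ε : DirichletCharacter ℂ q, ε ((d : ZMod q))⁻¹ * ε (n : ZMod q) := by
            rw [Finset.mul_sum]
            exact Finset.sum_congr rfl (fun ε _ => by ring)
          rw [this, DirichletCharacter.sum_char_inv_mul_char_eq ℂ hdu (n : ZMod q)]
          by_cases hmem : n ≡ d [MOD q]
          · rw [Set.indicator_of_mem (show n ∈ {n : ℕ | n ≡ d [MOD q]} from hmem),
              if_pos (((ZMod.natCast_eq_natCast_iff n d q).mpr hmem).symm)]
            field_simp
          · rw [Set.indicator_of_notMem (show n ∉ {n : ℕ | n ≡ d [MOD q]} from hmem),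
              if_neg (fun hc => hmem ((ZMod.natCast_eq_natCast_iff n d q).mp hc.symm))]
            ring
      _ = ∑' n : {n : ℕ // n ≡ d [MOD q]}, ((f n : ℂ)) / ((n : ℕ) : ℂ) ^ z := by
          exact (tsum_subtype {n : ℕ | n ≡ d [MOD q]} (fun n => (f n : ℂ) / (n : ℂ) ^ z)).symm
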